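/- arXiv:2303.11876 — 3 statements merged into one kernel-verified Lean document; each statement's English description precedes it below -/
import Mathlib

section
/- Existence and uniqueness of solutions of polynomial SDEs: let K be a field of characteristic 0, n ≥ 1, let p₁,...,pₙ be polynomials in the variables x, y₁, ..., yₙ with coefficients in K, and let r = (r₁,...,rₙ) ∈ Kⁿ. Then there exists a unique tuple of streams σ = (σ₁,...,σₙ) over K such that σᵢ(0) = rᵢ and σᵢ' = pᵢ(X, σ) for every i = 1,...,n. -/
/-- Stream derivative: remove the first coefficient. -/
noncomputable def sderiv {K : Type*} [Field K] (σ : PowerSeries K) : PowerSeries K :=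
  PowerSeries.mk fun k => PowerSeries.coeff (R := K) (k + 1) σ

/-- Evaluation of a polynomial in variables `x, y₁, ..., yₙ` (variable `0` playing the
role of `x`) at `x := X` and `yᵢ := σᵢ`. -/
noncomputable def polyEval {K : Type*} [Field K] {n : ℕ}
    (p : MvPolynomial (Fin (n + 1)) K) (σ : Fin n → PowerSeries K) : PowerSeries K :=
  MvPolynomial.aeval (Fin.cons PowerSeries.X σ) p

open PowerSeries

/-- The Picard-style operator whose fixed points are the SDE solutions. -/
noncomputable def PhiSDE {K : Type*} [Field K] {n : ℕ}
    (p : Fin n → MvPolynomial (Fin (n + 1)) K) (r : Fin n → K)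
    (σ : Fin n → PowerSeries K) : Fin n → PowerSeries K :=
  fun i => PowerSeries.mk fun k =>
    match k with
    | 0 => r i
    | k + 1 => PowerSeries.coeff (R := K) k (polyEval (p i) σ)

lemma polyEval_congr {K : Type*} [Field K] {n N : ℕ}
    (p : MvPolynomial (Fin (n + 1)) K) {σ τ : Fin n → PowerSeries K}
    (h : ∀ j, (PowerSeries.X : PowerSeries K) ^ N ∣ σ j - τ j) :
    (PowerSeries.X : PowerSeries K) ^ N ∣ polyEval p σ - polyEval p τ := by
  induction p using MvPolynomial.induction_on with
  | C a => simp [polyEval]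
  | add f g hf hg =>
      have : polyEval (f + g) σ - polyEval (f + g) τ
          = (polyEval f σ - polyEval f τ) + (polyEval g σ - polyEval g τ) := by
        simp [polyEval, map_add]; ring
      rw [this]; exact dvd_add hf hg
  | mul_X f i hf =>
      have key : (PowerSeries.X : PowerSeries K) ^ N ∣
          ((Fin.cons PowerSeries.X σ : Fin (n + 1) → PowerSeries K) i
            - (Fin.cons PowerSeries.X τ : Fin (n + 1) → PowerSeries K) i) := by
        rcases Fin.eq_zero_or_eq_succ i with rfl | ⟨j, rfl⟩
        · simp
        · simpa using h j
      have : polyEval (f * MvPolynomial.X i) σ - polyEval (f * MvPolynomial.X i) τ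
          = polyEval f σ * ((Fin.cons PowerSeries.X σ : Fin (n + 1) → PowerSeries K) i
              - (Fin.cons PowerSeries.X τ : Fin (n + 1) → PowerSeries K) i)
            + (polyEval f σ - polyEval f τ)
              * (Fin.cons PowerSeries.X τ : Fin (n + 1) → PowerSeries K) i := by
        simp [polyEval, map_mul, MvPolynomial.aeval_X]; ring
      rw [this]
      exact dvd_add (Dvd.dvd.mul_left key _) (Dvd.dvd.mul_right hf _)

lemma PhiSDE_contract {K : Type*} [Field K] {n N : ℕ}
    (p : Fin n → MvPolynomial (Fin (n + 1)) K) (r : Fin n → K)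
    {σ τ : Fin n → PowerSeries K}
    (h : ∀ j, (PowerSeries.X : PowerSeries K) ^ N ∣ σ j - τ j) :
    ∀ j, (PowerSeries.X : PowerSeries K) ^ (N + 1) ∣ PhiSDE p r σ j - PhiSDE p r τ j := by
  intro j
  rw [PowerSeries.X_pow_dvd_iff]
  intro m hm
  have hpe := polyEval_congr (p j) h
  rw [PowerSeries.X_pow_dvd_iff] at hpe
  cases m with
  | zero => simp [PhiSDE]
  | succ m =>
      have hm' : m < N := by omega
      have := hpe m hm'
      simp only [map_sub] at this ⊢
      simp only [PhiSDE, PowerSeries.coeff_mk]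
      exact this

/-- Existence and uniqueness of solutions of polynomial SDE initial value problems. -/
theorem polynomial_SDE_existence_uniqueness {K : Type*} [Field K] [CharZero K]
    {n : ℕ} (hn : 1 ≤ n) (p : Fin n → MvPolynomial (Fin (n + 1)) K) (r : Fin n → K) :
    ∃! σ : Fin n → PowerSeries K,
      ∀ i, PowerSeries.coeff (R := K) 0 (σ i) = r i ∧ sderiv (σ i) = polyEval (p i) σ := by
  -- A tuple is a solution iff it is a fixed point of `PhiSDE p r`.
  have hfix : ∀ σ : Fin n → PowerSeries K,
      (∀ i, PowerSeries.coeff (R := K) 0 (σ i) = r i ∧ sderiv (σ i) = polyEval (p i) σ)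
        ↔ PhiSDE p r σ = σ := by
    intro σ
    constructor
    · intro h
      funext i
      ext k
      cases k with
      | zero => simp [PhiSDE, (h i).1]
      | succ k =>
          have := congrArg (PowerSeries.coeff (R := K) k) (h i).2
          simp only [sderiv, PowerSeries.coeff_mk] at this
          simp [PhiSDE, PowerSeries.coeff_mk, this]
    · intro h i
      constructor
      · have := congrArg (fun f => PowerSeries.coeff (R := K) 0 (f i)) h
        simpa [PhiSDE] using this.symm
      · ext k
        have := congrArg (fun f => PowerSeries.coeff (R := K) (k + 1) (f i)) h
        simp only [PhiSDE, PowerSeries.coeff_mk] at this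
        simpa [sderiv, PowerSeries.coeff_mk] using this.symm
  -- iterates of Phi starting from 0
  set τ : ℕ → Fin n → PowerSeries K := fun m => (PhiSDE p r)^[m] (fun _ => 0) with hτ
  have hτsucc : ∀ m, τ (m + 1) = PhiSDE p r (τ m) := by
    intro m; simp [hτ, Function.iterate_succ_apply']
  -- coherence of iterates
  have hcoh : ∀ m m', m ≤ m' → ∀ j,
      (PowerSeries.X : PowerSeries K) ^ m ∣ τ m j - τ m' j := by
    intro m
    induction m with
    | zero => intro m' _ j; simp
    | succ m ih =>
        intro m' hm' j
        obtain ⟨m'', rfl⟩ : ∃ m'', m' = m'' + 1 := ⟨m' - 1, by omega⟩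
        rw [hτsucc, hτsucc]
        exact PhiSDE_contract p r (ih m'' (by omega)) j
  -- the candidate solution
  set σ : Fin n → PowerSeries K :=
    fun i => PowerSeries.mk fun k => PowerSeries.coeff (R := K) k (τ (k + 1) i) with hσ
  have hσcoeff : ∀ k m i, k < m → PowerSeries.coeff (R := K) k (σ i) = PowerSeries.coeff (R := K) k (τ m i) := by
    intro k m i hkm
    have := hcoh (k + 1) m hkm i
    rw [PowerSeries.X_pow_dvd_iff] at this
    have h0 := this k (by omega)
    rw [map_sub] at h0
    simp only [hσ, PowerSeries.coeff_mk]
    exact sub_eq_zero.mp h0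
  have hστ : ∀ m j, (PowerSeries.X : PowerSeries K) ^ m ∣ σ j - τ m j := by
    intro m j
    rw [PowerSeries.X_pow_dvd_iff]
    intro k hk
    rw [map_sub, hσcoeff k m j hk, sub_self]
  -- σ is a fixed point
  have hfp : PhiSDE p r σ = σ := by
    funext i
    ext k
    have h1 := PhiSDE_contract p r (hστ (k + 1)) i
    rw [PowerSeries.X_pow_dvd_iff] at h1
    have h2 := h1 k (by omega)
    rw [map_sub] at h2
    rw [← hτsucc] at h2
    have h3 : PowerSeries.coeff (R := K) k (PhiSDE p r σ i) = PowerSeries.coeff (R := K) k (τ (k + 2) i) := by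
      have := sub_eq_zero.mp h2
      simpa using this
    rw [h3, ← hσcoeff k (k + 2) i (by omega)]
  refine ⟨σ, (hfix σ).2 hfp, ?_⟩
  intro υ hυ
  have hυfp := (hfix υ).1 hυ
  -- uniqueness: both fixed points agree on all coefficients
  have hall : ∀ m j, (PowerSeries.X : PowerSeries K) ^ m ∣ υ j - σ j := by
    intro m
    induction m with
    | zero => intro j; simp
    | succ m ih =>
        intro j
        have := PhiSDE_contract p r ih j
        rwa [hυfp, hfp] at this
  funext j
  ext k
  have := hall (k + 1) j
  rw [PowerSeries.X_pow_dvd_iff] at this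
  have h0 := this k (by omega)
  rw [map_sub] at h0
  exact sub_eq_zero.mp h0
end

section
/- Symmetric product rule for stream derivative: for every field K and all streams σ, τ over K, (σ · τ)' = σ' · τ + σ · τ' − X · σ' · τ'. -/
lemma X_mul_sderiv {K : Type*} [Field K] (σ : PowerSeries K) :
    PowerSeries.X * sderiv σ = σ - PowerSeries.C (R := K) (PowerSeries.constantCoeff (R := K) σ) := by
  ext n
  cases n with
  | zero => simp [PowerSeries.coeff_zero_eq_constantCoeff]
  | succ n =>
    simp [PowerSeries.coeff_succ_X_mul, sderiv, PowerSeries.coeff_C, Nat.succ_ne_zero]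

/-- Symmetric product rule for the stream derivative. -/
theorem sderiv_mul_symmetric {K : Type*} [Field K] (σ τ : PowerSeries K) :
    sderiv (σ * τ) =
      sderiv σ * τ + σ * sderiv τ - PowerSeries.X * sderiv σ * sderiv τ := by
  have hX : (PowerSeries.X : PowerSeries K) ≠ 0 := PowerSeries.X_ne_zero
  apply mul_left_cancel₀ hX
  have h1 := X_mul_sderiv (σ * τ)
  have h2 := X_mul_sderiv σ
  have h3 := X_mul_sderiv τ
  rw [h1]
  have : PowerSeries.X * (sderiv σ * τ + σ * sderiv τ -
      PowerSeries.X * sderiv σ * sderiv τ) =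
      (PowerSeries.X * sderiv σ) * τ + σ * (PowerSeries.X * sderiv τ) -
      (PowerSeries.X * sderiv σ) * (PowerSeries.X * sderiv τ) := by ring
  rw [this, h2, h3]
  simp [map_mul]
  ring
end

section
/- The Taylor coefficient stream of √(1−x²) is the unique stream solution of x² + y² − 1 = 0 with initial value 1: there is a unique formal power series σ over ℝ with constant coefficient 1 satisfying X² + σ² = 1; moreover the function f(x) = √(1−x²) is analytic at 0 and for every n ≥ 0 the n-th coefficient of σ equals f⁽ⁿ⁾(0)/n!, the n-th Taylor coefficient of f at 0. -/
open Finset FormalMultilinearSeries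
open scoped ENNReal NNReal

private lemma conv_key (a b : ℕ → ℝ) (x : ℝ) (n : ℕ) :
    ∑ kl ∈ Finset.HasAntidiagonal.antidiagonal n, (a kl.1 * x ^ kl.1) * (b kl.2 * x ^ kl.2)
      = (∑ kl ∈ Finset.HasAntidiagonal.antidiagonal n, a kl.1 * b kl.2) * x ^ n := by
  rw [Finset.sum_mul]
  refine Finset.sum_congr rfl fun kl hkl => ?_
  rw [Finset.HasAntidiagonal.mem_antidiagonal] at hkl
  rw [← hkl, pow_add]; ring

private lemma cauchy_aux {a b : ℕ → ℝ} {x L M : ℝ}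
    (ha : Summable fun n => ‖a n * x ^ n‖) (hb : Summable fun n => ‖b n * x ^ n‖)
    (hA : HasSum (fun n => a n * x ^ n) L) (hB : HasSum (fun n => b n * x ^ n) M) :
    HasSum (fun n => (∑ kl ∈ Finset.HasAntidiagonal.antidiagonal n, a kl.1 * b kl.2) * x ^ n) (L * M) := by
  have hs : Summable fun n => ∑ kl ∈ Finset.HasAntidiagonal.antidiagonal n,
      (a kl.1 * x ^ kl.1) * (b kl.2 * x ^ kl.2) :=
    (summable_norm_sum_mul_antidiagonal_of_summable_norm ha hb).of_norm
  have h2 := hs.hasSum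
  rw [← tsum_mul_tsum_eq_tsum_sum_antidiagonal_of_summable_norm ha hb,
    hA.tsum_eq, hB.tsum_eq] at h2
  simpa only [conv_key] using h2

private lemma f_analytic : AnalyticAt ℝ (fun x : ℝ => Real.sqrt (1 - x ^ 2)) 0 := by
  have hF : AnalyticAt ℂ (fun z : ℂ => (1 - z ^ 2) ^ (1/2 : ℂ)) 0 := by
    apply AnalyticAt.cpow (analyticAt_const.sub (analyticAt_id.pow 2)) analyticAt_const
    simpa using Complex.one_mem_slitPlane
  have hco : AnalyticAt ℝ (fun x : ℝ => (x : ℂ)) 0 := Complex.ofRealCLM.analyticAt 0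
  have h1 : AnalyticAt ℝ
      ((fun z : ℂ => (1 - z ^ 2) ^ (1/2 : ℂ)) ∘ (fun x : ℝ => (x : ℂ))) 0 := by
    apply AnalyticAt.comp _ hco
    simpa using hF.restrictScalars (𝕜 := ℝ)
  have h2 : AnalyticAt ℝ
      (Complex.re ∘ ((fun z : ℂ => (1 - z ^ 2) ^ (1/2 : ℂ)) ∘ (fun x : ℝ => (x : ℂ)))) 0 :=
    (Complex.reCLM.analyticAt _).comp h1
  apply h2.congr
  filter_upwards [Metric.ball_mem_nhds (0 : ℝ) one_pos] with x hx
  rw [Metric.mem_ball, Real.dist_0_eq_abs] at hx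
  have hx2 : (0 : ℝ) ≤ 1 - x ^ 2 := by nlinarith [sq_abs x, abs_nonneg x]
  have e1 : (1 : ℂ) - (x : ℂ) ^ 2 = ((1 - x ^ 2 : ℝ) : ℂ) := by push_cast; ring
  have e2 : (1/2 : ℂ) = ((1/2 : ℝ) : ℂ) := by norm_num
  simp only [Function.comp_apply]
  rw [e1, e2, ← Complex.ofReal_cpow hx2, Complex.ofReal_re, Real.sqrt_eq_rpow]

/-- The Taylor coefficient stream of `√(1-x²)` is the unique stream solution of
`x² + y² - 1 = 0` with initial value `1`. -/
theorem sqrt_one_sub_sq_stream :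
    (∃! σ : PowerSeries ℝ,
      PowerSeries.constantCoeff σ = 1 ∧ PowerSeries.X^2 + σ^2 = 1) ∧
    AnalyticAt ℝ (fun x : ℝ => Real.sqrt (1 - x^2)) 0 ∧
    ∀ σ : PowerSeries ℝ,
      (PowerSeries.constantCoeff σ = 1 ∧ PowerSeries.X^2 + σ^2 = 1) →
      ∀ n : ℕ,
        PowerSeries.coeff n σ =
          iteratedDeriv n (fun x : ℝ => Real.sqrt (1 - x^2)) 0 / (n.factorial : ℝ) := by
  set f : ℝ → ℝ := fun x => Real.sqrt (1 - x ^ 2) with hf_def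
  have hf : AnalyticAt ℝ f 0 := f_analytic
  obtain ⟨p, hp⟩ := hf
  obtain ⟨r, hpr⟩ := hp
  set a : ℕ → ℝ := fun n => p.coeff n with ha_def
  -- coefficients equal Taylor coefficients
  have ha_deriv : ∀ n, a n = iteratedDeriv n f 0 / n.factorial := by
    intro n
    have h1 := hpr.factorial_smul (1 : ℝ) n
    rw [p.apply_eq_pow_smul_coeff, one_pow, one_smul] at h1
    rw [← iteratedDeriv_eq_iteratedFDeriv, nsmul_eq_mul] at h1
    rw [eq_div_iff (by exact_mod_cast n.factorial_ne_zero)]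
    rw [← h1]; ring
  -- choose a small positive radius
  obtain ⟨r', h0r', hr'⟩ := ENNReal.lt_iff_exists_nnreal_btwn.mp
    (show (0 : ℝ≥0∞) < min r 1 from lt_min hpr.r_pos one_pos)
  have hr'r : (r' : ℝ≥0∞) < r := hr'.trans_le (min_le_left _ _)
  have hr'rad : (r' : ℝ≥0∞) < p.radius := hr'r.trans_le hpr.r_le
  have h0r'' : 0 < r' := by exact_mod_cast h0r'
  -- HasSum and summability facts inside the ball
  have hsum_f : ∀ x : ℝ, ‖x‖₊ < r' → HasSum (fun n => a n * x ^ n) (f x) := by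
    intro x hx
    have hxr : x ∈ EMetric.ball (0 : ℝ) r :=
      mem_emetric_ball_zero_iff.mpr ((ENNReal.coe_lt_coe.mpr hx).trans hr'r)
    have := hpr.hasSum hxr
    simp only [zero_add] at this
    refine this.congr_fun fun n => ?_
    rw [p.apply_eq_pow_smul_coeff, smul_eq_mul]; ring
  have hnorm_f : ∀ x : ℝ, ‖x‖₊ ≤ r' → Summable fun n => ‖a n * x ^ n‖ := by
    intro x hx
    have hxr : x ∈ EMetric.ball (0 : ℝ) p.radius :=
      mem_emetric_ball_zero_iff.mpr ((ENNReal.coe_le_coe.mpr hx).trans_lt hr'rad)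
    refine (p.summable_norm_apply hxr).congr fun n => ?_
    rw [p.apply_eq_pow_smul_coeff, smul_eq_mul, mul_comm]
  set c : ℕ → ℝ := fun n => ∑ kl ∈ Finset.HasAntidiagonal.antidiagonal n, a kl.1 * a kl.2 with hc_def
  set d : ℕ → ℝ := fun n => if n = 0 then 1 else if n = 2 then -1 else 0 with hd_def
  -- power series for f * f
  have hcball : HasFPowerSeriesOnBall (fun x => f x * f x) (ofScalars ℝ c) 0 r' := by
    have hnn : ‖(r' : ℝ)‖₊ = r' :=
      NNReal.eq (by rw [coe_nnnorm, Real.norm_of_nonneg r'.coe_nonneg])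
    have hrad : (r' : ℝ≥0∞) ≤ (ofScalars ℝ c).radius := by
      apply FormalMultilinearSeries.le_radius_of_summable
      have hle : ‖(r' : ℝ)‖₊ ≤ r' := le_of_eq hnn
      have hs := summable_norm_sum_mul_antidiagonal_of_summable_norm
        (hnorm_f (r' : ℝ) hle) (hnorm_f (r' : ℝ) hle)
      refine hs.congr fun n => ?_
      rw [conv_key]
      rw [ofScalars_norm, norm_mul, norm_pow, Real.norm_of_nonneg r'.coe_nonneg]
    refine ⟨hrad, by exact_mod_cast h0r', fun {y} hy => ?_⟩
    rw [mem_emetric_ball_zero_iff, enorm_eq_nnnorm, ENNReal.coe_lt_coe] at hy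
    have := cauchy_aux (hnorm_f y hy.le) (hnorm_f y hy.le) (hsum_f y hy) (hsum_f y hy)
    simp only [zero_add]
    refine this.congr_fun fun n => ?_
    rw [ofScalars_apply_eq, smul_eq_mul]
  -- power series for the polynomial 1 - x²
  have hdball : HasFPowerSeriesOnBall (fun x : ℝ => 1 - x ^ 2) (ofScalars ℝ d) 0 r' := by
    have hrad : (r' : ℝ≥0∞) ≤ (ofScalars ℝ d).radius := by
      apply FormalMultilinearSeries.le_radius_of_summable
      apply summable_of_ne_finset_zero (s := ({0, 2} : Finset ℕ))
      intro n hn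
      simp only [Finset.mem_insert, Finset.mem_singleton, not_or] at hn
      rw [ofScalars_norm]
      simp [hd_def, hn.1, hn.2]
    refine ⟨hrad, by exact_mod_cast h0r', fun {y} hy => ?_⟩
    have h := hasSum_sum_of_ne_finset_zero (s := ({0, 2} : Finset ℕ))
      (f := fun n => ofScalars ℝ d n fun _ => y) (L := SummationFilter.unconditional ℕ) ?_
    · have hd0 : d 0 = 1 := by simp [hd_def]
      have hd2 : d 2 = -1 := by simp [hd_def]
      have hval : (∑ b ∈ ({0, 2} : Finset ℕ), (ofScalars ℝ d b fun _ => y))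
          = 1 - (0 + y) ^ 2 := by
        rw [Finset.sum_pair (by norm_num : (0:ℕ) ≠ 2), ofScalars_apply_eq, ofScalars_apply_eq,
          hd0, hd2]
        simp only [smul_eq_mul]
        ring
      show HasSum (fun n => ofScalars ℝ d n fun _ => y) (1 - (0 + y) ^ 2)
      exact hval ▸ h
    · intro n hn
      simp only [Finset.mem_insert, Finset.mem_singleton, not_or] at hn
      show (ofScalars ℝ d n fun _ => y) = 0
      rw [ofScalars_apply_eq]
      simp [hd_def, hn.1, hn.2]
  -- the two series agree, so c = d
  have hcd : c = d := by
    apply ofScalars_series_injective (𝕜 := ℝ) (E := ℝ)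
    refine HasFPowerSeriesAt.eq_formalMultilinearSeries_of_eventually
      ⟨r', hcball⟩ ⟨r', hdball⟩ ?_
    filter_upwards [Metric.ball_mem_nhds (0 : ℝ) one_pos] with x hx
    rw [Metric.mem_ball, Real.dist_0_eq_abs] at hx
    have hx2 : (0 : ℝ) ≤ 1 - x ^ 2 := by nlinarith [sq_abs x, abs_nonneg x]
    exact Real.mul_self_sqrt hx2
  -- the power series σ
  set σ : PowerSeries ℝ := PowerSeries.mk a with hσ_def
  have hσc : PowerSeries.constantCoeff σ = 1 := by
    rw [hσ_def, PowerSeries.constantCoeff_mk]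
    have := hpr.coeff_zero (fun _ => (1 : ℝ))
    have h0 : a 0 = f 0 := by
      rw [ha_def]
      simp only [FormalMultilinearSeries.coeff]
      convert this using 2
    rw [h0, hf_def]
    norm_num
  have hσcoeff : ∀ n, PowerSeries.coeff n σ = a n := fun n => PowerSeries.coeff_mk n a
  have hσsq : ∀ n, PowerSeries.coeff n (σ ^ 2) = c n := by
    intro n
    rw [sq, PowerSeries.coeff_mul, hc_def]
    exact Finset.sum_congr rfl fun kl _ => by rw [hσcoeff, hσcoeff]
  have hσeq : PowerSeries.X ^ 2 + σ ^ 2 = 1 := by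
    ext n
    rw [map_add, hσsq n, hcd, PowerSeries.coeff_X_pow, PowerSeries.coeff_one, hd_def]
    rcases eq_or_ne n 0 with h0 | h0
    · subst h0; norm_num
    · rcases eq_or_ne n 2 with h2 | h2
      · subst h2; norm_num
      · simp [h0, h2]
  -- uniqueness
  have huniq : ∀ τ : PowerSeries ℝ,
      (PowerSeries.constantCoeff τ = 1 ∧ PowerSeries.X ^ 2 + τ ^ 2 = 1) → τ = σ := by
    rintro τ ⟨hτc, hτeq⟩
    have hsq : τ ^ 2 = σ ^ 2 := by
      linear_combination hτeq - hσeq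
    have hz : (τ + σ) * (τ - σ) = 0 := by
      have h := sq_sub_sq τ σ
      rw [hsq, sub_self] at h
      exact h.symm
    rcases mul_eq_zero.mp hz with h | h
    · exfalso
      have : PowerSeries.constantCoeff (τ + σ) = 2 := by
        rw [map_add, hτc, hσc]; norm_num
      rw [h, map_zero] at this
      norm_num at this
    · exact sub_eq_zero.mp h
  refine ⟨⟨σ, ⟨hσc, hσeq⟩, huniq⟩, f_analytic, ?_⟩
  rintro τ hτ n
  rw [huniq τ hτ, hσcoeff n, ha_deriv n]
end
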